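/- Let (Ω, ℱ, P) be a probability space with filtration (ℱ_s)_{s≥0}, let (a_s)_{s≥1} be an ℝⁿ-valued adapted process with ‖a_s‖ ≤ a_max almost surely, and let (x_s)_{s≥1} be ℝⁿ-valued with each x_s ℱ_{s−1}-measurable and ‖x_s‖ ≤ a_max almost surely. Suppose E[ ‖a_s − x_s‖² | ℱ_{s−1} ] ≤ nD/√s almost surely for every s ≥ 1, where D > 0. Then for every t ≥ 1, ‖ ∑_{s=1}^{t} E[ ( a_s a_sᵀ − E[a_s a_sᵀ | ℱ_{s−1}] )² ] ‖ ≤ 128 a_max² n D √t, where ‖·‖ denotes the spectral (operator 2-) norm on n×n matrices. -/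

import Mathlib

open MeasureTheory Matrix

/-- The spectral (operator 2-) norm of a real square matrix. -/
noncomputable def specNorm {n : ℕ} (A : Matrix (Fin n) (Fin n) ℝ) : ℝ :=
  ‖Matrix.toEuclideanCLM (𝕜 := ℝ) A‖

/-- The outer product `v vᵀ` of a vector with itself, as a matrix. -/
noncomputable def outerMat {n : ℕ} (v : EuclideanSpace ℝ (Fin n)) :
    Matrix (Fin n) (Fin n) ℝ :=
  Matrix.of fun i j => v i * v j

namespace CMVAux


lemma sq_le_imp {a b : ℝ} (ha : 0 ≤ a) (hb : 0 ≤ b) (h : a^2 ≤ b^2) : a ≤ b := by nlinarith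

lemma euclid_norm_sq {ι : Type*} [Fintype ι] (v : EuclideanSpace ℝ ι) :
    ‖v‖ ^ 2 = ∑ i, v i ^ 2 := by
  rw [EuclideanSpace.norm_eq, Real.sq_sqrt (by positivity)]
  exact Finset.sum_congr rfl fun i _ => by rw [Real.norm_eq_abs, sq_abs]

noncomputable def matVec {n : ℕ} (A : Matrix (Fin n) (Fin n) ℝ) :
    EuclideanSpace ℝ (Fin n × Fin n) := WithLp.toLp 2 (fun p : Fin n × Fin n => A p.1 p.2)

lemma matVec_norm_sq {n : ℕ} (A : Matrix (Fin n) (Fin n) ℝ) :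
    ‖matVec A‖ ^ 2 = ∑ i, ∑ j, A i j ^ 2 := by
  rw [euclid_norm_sq]
  rw [show (∑ p : Fin n × Fin n, matVec A p ^ 2) = ∑ p : Fin n × Fin n, A p.1 p.2 ^ 2 from rfl]
  exact Fintype.sum_prod_type _

lemma specNorm_le_matVec {n : ℕ} (A : Matrix (Fin n) (Fin n) ℝ) :
    specNorm A ≤ ‖matVec A‖ := by
  rw [specNorm]
  refine ContinuousLinearMap.opNorm_le_bound _ (norm_nonneg _) fun v => ?_
  refine sq_le_imp (norm_nonneg _) (by positivity) ?_
  have hcoord : ∀ i, (Matrix.toEuclideanCLM (𝕜 := ℝ) A v) i = ∑ j, A i j * v j := by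
    intro i
    have := Matrix.ofLp_toEuclideanCLM (n := Fin n) (𝕜 := ℝ) A v
    have h2 := congrFun this i
    simpa [Matrix.mulVec, dotProduct] using h2
  rw [euclid_norm_sq]
  calc ∑ i, (Matrix.toEuclideanCLM (𝕜 := ℝ) A v) i ^ 2
      = ∑ i, (∑ j, A i j * v j) ^ 2 := by simp_rw [hcoord]
    _ ≤ ∑ i, (∑ j, A i j ^ 2) * (∑ j, v j ^ 2) := by
        exact Finset.sum_le_sum fun i _ =>
          Finset.sum_mul_sq_le_sq_mul_sq _ _ _
    _ = (∑ i, ∑ j, A i j ^ 2) * (∑ j, v j ^ 2) := by rw [← Finset.sum_mul]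
    _ = ‖matVec A‖ ^ 2 * ‖v‖ ^ 2 := by rw [matVec_norm_sq, euclid_norm_sq]
    _ = (‖matVec A‖ * ‖v‖) ^ 2 := by ring

lemma matVec_sq_norm_le {n : ℕ} (A : Matrix (Fin n) (Fin n) ℝ) :
    ‖matVec (A * A)‖ ≤ ∑ i, ∑ j, A i j ^ 2 := by
  have hT : (0:ℝ) ≤ ∑ i, ∑ j, A i j ^ 2 := by positivity
  refine sq_le_imp (norm_nonneg _) hT ?_
  rw [matVec_norm_sq]
  calc ∑ i, ∑ j, (A * A) i j ^ 2
      = ∑ i, ∑ j, (∑ k, A i k * A k j) ^ 2 := by simp_rw [Matrix.mul_apply]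
    _ ≤ ∑ i, ∑ j, (∑ k, A i k ^ 2) * (∑ k, A k j ^ 2) := by
        refine Finset.sum_le_sum fun i _ => Finset.sum_le_sum fun j _ =>
          Finset.sum_mul_sq_le_sq_mul_sq _ _ _
    _ = (∑ i, ∑ k, A i k ^ 2) * (∑ j, ∑ k, A k j ^ 2) := by
        rw [← Finset.sum_mul_sum]
    _ = (∑ i, ∑ j, A i j ^ 2) ^ 2 := by rw [Finset.sum_comm (f := fun j k => A k j ^ 2)]; ring

lemma outer_diff_bound {n : ℕ} (amax : ℝ) (v w : EuclideanSpace ℝ (Fin n))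
    (hv : ‖v‖ ≤ amax) (hw : ‖w‖ ≤ amax) :
    ∑ i, ∑ j, (v i * v j - w i * w j) ^ 2 ≤ 4 * amax ^ 2 * ‖v - w‖ ^ 2 := by
  have hd : ∀ i, (v - w) i = v i - w i := fun i => rfl
  have hv2 : ∑ i, v i ^ 2 = ‖v‖ ^ 2 := (euclid_norm_sq v).symm
  have hw2 : ∑ i, w i ^ 2 = ‖w‖ ^ 2 := (euclid_norm_sq w).symm
  have hd2 : ∑ i, (v i - w i) ^ 2 = ‖v - w‖ ^ 2 := by
    rw [euclid_norm_sq]; exact Finset.sum_congr rfl fun i _ => by rw [hd]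
  calc ∑ i, ∑ j, (v i * v j - w i * w j) ^ 2
      ≤ ∑ i, ∑ j, (2 * (v i ^ 2 * (v j - w j) ^ 2) + 2 * ((v i - w i) ^ 2 * w j ^ 2)) := by
        refine Finset.sum_le_sum fun i _ => Finset.sum_le_sum fun j _ => ?_
        nlinarith [sq_nonneg (v i * (v j - w j) - (v i - w i) * w j)]
    _ = 2 * ((∑ i, v i ^ 2) * (∑ j, (v j - w j) ^ 2))
        + 2 * ((∑ i, (v i - w i) ^ 2) * (∑ j, w j ^ 2)) := by
        have fact : ∀ (f g : Fin n → ℝ), (∑ i, ∑ j, 2 * (f i * g j))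
            = 2 * ((∑ i, f i) * (∑ j, g j)) := by
          intro f g
          rw [Finset.sum_mul_sum, Finset.mul_sum]
          exact Finset.sum_congr rfl fun i _ => by rw [Finset.mul_sum]
        rw [← fact (fun i => v i ^ 2) (fun j => (v j - w j) ^ 2),
          ← fact (fun i => (v i - w i) ^ 2) (fun j => w j ^ 2),
          ← Finset.sum_add_distrib]
        exact Finset.sum_congr rfl fun i _ => by rw [← Finset.sum_add_distrib]
    _ ≤ 4 * amax ^ 2 * ‖v - w‖ ^ 2 := by
        rw [hv2, hd2, hw2]
        have h1 : (0:ℝ) ≤ ‖v - w‖ ^ 2 := by positivity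
        have hv3 : ‖v‖ ^ 2 ≤ amax ^ 2 := by nlinarith [norm_nonneg v]
        have hw3 : ‖w‖ ^ 2 ≤ amax ^ 2 := by nlinarith [norm_nonneg w]
        nlinarith [mul_nonneg (sub_nonneg.2 hv3) h1, mul_nonneg (sub_nonneg.2 hw3) h1]


lemma abs_coord_le {ι : Type*} [Fintype ι] (v : EuclideanSpace ℝ ι) (i : ι) : |v i| ≤ ‖v‖ := by
  have h1 : (v i)^2 ≤ ‖v‖^2 := by
    rw [show ‖v‖^2 = ∑ i, v i ^ 2 from (euclid_norm_sq v)]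
    exact Finset.single_le_sum (f := fun j => v j ^ 2) (fun j _ => sq_nonneg _) (Finset.mem_univ i)
  nlinarith [norm_nonneg v, sq_abs (v i), abs_nonneg (v i)]

lemma matVec_add {n : ℕ} (A B : Matrix (Fin n) (Fin n) ℝ) :
    matVec (A + B) = matVec A + matVec B := by ext p; rfl

lemma matVec_sum {n : ℕ} {β : Type*} (S : Finset β) (f : β → Matrix (Fin n) (Fin n) ℝ) :
    matVec (∑ s ∈ S, f s) = ∑ s ∈ S, matVec (f s) := by
  classical
  induction S using Finset.induction with
  | empty => ext p; simp [matVec]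
  | insert _ _ h ih => rw [Finset.sum_insert h, Finset.sum_insert h, matVec_add, ih]


variable {Ω : Type*} {mΩ : MeasurableSpace Ω} {μ : Measure Ω}

lemma integrable_of_bdd [IsFiniteMeasure μ] {f : Ω → ℝ} {C : ℝ}
    (hf : AEStronglyMeasurable f μ) (h : ∀ᵐ ω ∂μ, |f ω| ≤ C) : Integrable f μ :=
  (integrable_const C).mono' hf (by filter_upwards [h] with ω hω; simpa [Real.norm_eq_abs] using hω)

/-- conditional expectation is the best L² approximation among m-measurable functions. -/
lemma condexp_L2_proj [IsProbabilityMeasure μ] {m : MeasurableSpace Ω} (hm : m ≤ mΩ)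
    {Y Z : Ω → ℝ} {CY CZ : ℝ} (hCY : 0 ≤ CY)
    (hYm : StronglyMeasurable[mΩ] Y) (hYb : ∀ᵐ ω ∂μ, |Y ω| ≤ CY)
    (hZm : StronglyMeasurable[m] Z) (hZb : ∀ᵐ ω ∂μ, |Z ω| ≤ CZ) :
    ∫ ω, (Y ω - (μ[Y|m]) ω) ^ 2 ∂μ ≤ ∫ ω, (Y ω - Z ω) ^ 2 ∂μ := by
  haveI : SigmaFinite (μ.trim hm) := by
    have : IsFiniteMeasure (μ.trim hm) := isFiniteMeasure_trim hm
    infer_instance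
  set W := μ[Y|m] with hW
  have hYint : Integrable Y μ := integrable_of_bdd (μ := μ) (hYm.aestronglyMeasurable (μ := μ)) hYb
  have hWm : StronglyMeasurable[m] W := stronglyMeasurable_condExp
  have hWm' : StronglyMeasurable[mΩ] W := hWm.mono hm
  have hWb : ∀ᵐ ω ∂μ, |W ω| ≤ CY := by
    have := ae_bdd_condExp_of_ae_bdd (m := m) (μ := μ) (R := CY.toNNReal)
      (f := Y) (by filter_upwards [hYb] with ω hω; rwa [Real.coe_toNNReal _ hCY])
    filter_upwards [this] with ω hω; rwa [Real.coe_toNNReal _ hCY] at hω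
  have hZm' : StronglyMeasurable[mΩ] Z := hZm.mono hm
  set g : Ω → ℝ := fun ω => W ω - Z ω with hg
  have hgm : StronglyMeasurable[m] g := hWm.sub hZm
  have hgm' : StronglyMeasurable[mΩ] g := hgm.mono hm
  have hgb : ∀ᵐ ω ∂μ, |g ω| ≤ CY + CZ := by
    filter_upwards [hWb, hZb] with ω h1 h2
    calc |W ω - Z ω| ≤ |W ω| + |Z ω| := abs_sub _ _
      _ ≤ CY + CZ := add_le_add h1 h2
  have hgYint : Integrable (g * Y) μ :=
    integrable_of_bdd (μ := μ) ((hgm'.mul hYm).aestronglyMeasurable (μ := μ))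
      (C := (CY + CZ) * CY)
      (by filter_upwards [hgb, hYb] with ω h1 h2
          rw [Pi.mul_apply, abs_mul]
          exact mul_le_mul h1 h2 (abs_nonneg _) (le_trans (abs_nonneg _) h1))
  have hgWint : Integrable (fun ω => g ω * W ω) μ :=
    integrable_of_bdd (μ := μ) ((hgm'.mul hWm').aestronglyMeasurable (μ := μ))
      (C := (CY + CZ) * CY)
      (by filter_upwards [hgb, hWb] with ω h1 h2
          rw [abs_mul]
          exact mul_le_mul h1 h2 (abs_nonneg _) (le_trans (abs_nonneg _) h1))
  -- orthogonality: ∫ (Y - W) * g = 0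
  have horth : ∫ ω, (Y ω - W ω) * g ω ∂μ = 0 := by
    have hpull : μ[g * Y|m] =ᵐ[μ] g * W :=
      condExp_mul_of_stronglyMeasurable_left hgm hgYint hYint
    have h1 : ∫ ω, (g * Y) ω ∂μ = ∫ ω, (g * W) ω ∂μ := by
      rw [← integral_condExp (μ := μ) (f := g * Y) hm]
      exact integral_congr_ae hpull
    have h2 : (fun ω => (Y ω - W ω) * g ω)
        = fun ω => (g * Y) ω - (fun ω' => g ω' * W ω') ω := by
      funext ω; show (Y ω - W ω) * g ω = g ω * Y ω - g ω * W ω; ring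
    rw [h2, integral_sub hgYint hgWint]
    have h3 : ∫ ω, (g * W) ω ∂μ = ∫ ω, g ω * W ω ∂μ := rfl
    rw [h1, h3, sub_self]
  -- expansion
  have hYW2int : Integrable (fun ω => (Y ω - W ω) ^ 2) μ :=
    integrable_of_bdd (μ := μ) (((hYm.sub hWm').pow 2).aestronglyMeasurable (μ := μ))
      (C := (CY + CY) ^ 2)
      (by filter_upwards [hYb, hWb] with ω h1 h2
          rw [abs_pow]
          refine pow_le_pow_left₀ (abs_nonneg _) ?_ 2
          calc |Y ω - W ω| ≤ |Y ω| + |W ω| := abs_sub _ _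
            _ ≤ CY + CY := add_le_add h1 h2)
  have hcrossint : Integrable (fun ω => 2 * ((Y ω - W ω) * g ω)) μ := by
    refine Integrable.const_mul ?_ 2
    have : (fun ω => (Y ω - W ω) * g ω)
        = fun ω => g ω * Y ω - g ω * W ω := by funext ω; ring
    rw [this]; exact hgYint.sub hgWint
  have hg2int : Integrable (fun ω => g ω ^ 2) μ :=
    integrable_of_bdd (μ := μ) (((hgm'.pow 2)).aestronglyMeasurable (μ := μ))
      (C := (CY + CZ) ^ 2)
      (by filter_upwards [hgb] with ω h1
          rw [abs_pow]
          exact pow_le_pow_left₀ (abs_nonneg _) h1 2)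
  have hfe : (fun ω => (Y ω - Z ω) ^ 2)
      = fun ω => (Y ω - W ω) ^ 2 + (2 * ((Y ω - W ω) * g ω) + g ω ^ 2) := by
    funext ω
    show (Y ω - Z ω) ^ 2 = (Y ω - W ω) ^ 2 + (2 * ((Y ω - W ω) * (W ω - Z ω)) + (W ω - Z ω) ^ 2)
    ring
  have hexp : ∫ ω, (Y ω - Z ω) ^ 2 ∂μ
      = ∫ ω, (Y ω - W ω) ^ 2 ∂μ + (∫ ω, 2 * ((Y ω - W ω) * g ω) ∂μ
        + ∫ ω, g ω ^ 2 ∂μ) := by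
    have hsum : Integrable (fun ω => 2 * ((Y ω - W ω) * g ω) + g ω ^ 2) μ :=
      hcrossint.add hg2int
    rw [hfe]
    rw [integral_add hYW2int hsum, integral_add hcrossint hg2int]
  have hcross0 : ∫ ω, 2 * ((Y ω - W ω) * g ω) ∂μ = 0 := by
    rw [integral_const_mul, horth, mul_zero]
  have hg2 : 0 ≤ ∫ ω, g ω ^ 2 ∂μ := integral_nonneg fun ω => sq_nonneg _
  rw [hexp, hcross0]
  linarith


lemma sum_inv_sqrt_le : ∀ t : ℕ, ∑ s ∈ Finset.Icc 1 t, (Real.sqrt s)⁻¹ ≤ 2 * Real.sqrt t := by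
  intro t
  induction t with
  | zero => simp
  | succ t ih =>
    rw [Finset.sum_Icc_succ_top (Nat.one_le_iff_ne_zero.mpr (Nat.succ_ne_zero t))]
    have hq : 0 < Real.sqrt (t + 1 : ℕ) := Real.sqrt_pos.2 (by positivity)
    have h1 : Real.sqrt (t + 1 : ℕ) ^ 2 = (t : ℝ) + 1 := by
      rw [Real.sq_sqrt (by positivity)]; push_cast; ring
    have h2 : Real.sqrt t ^ 2 = (t : ℝ) := Real.sq_sqrt (Nat.cast_nonneg t)
    have h3 : (0:ℝ) ≤ Real.sqrt t := Real.sqrt_nonneg _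
    have key : (Real.sqrt (t + 1 : ℕ))⁻¹ ≤ 2 * (Real.sqrt (t + 1 : ℕ) - Real.sqrt t) := by
      rw [inv_eq_one_div, div_le_iff₀ hq]
      nlinarith [sq_nonneg (Real.sqrt (t + 1 : ℕ) - Real.sqrt t)]
    linarith
lemma coord_sm {n : ℕ} {Ω : Type*} {m' : MeasurableSpace Ω} {f : Ω → EuclideanSpace ℝ (Fin n)}
    (hf : StronglyMeasurable[m'] f) (i : Fin n) :
    StronglyMeasurable[m'] (fun ω => f ω i) :=
  (EuclideanSpace.proj (𝕜 := ℝ) i).continuous.comp_stronglyMeasurable hf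

lemma aesm_matVec {n : ℕ} {Ω : Type*} {mΩ : MeasurableSpace Ω} (μ : Measure Ω)
    {F : Ω → Matrix (Fin n) (Fin n) ℝ}
    (h : ∀ i j, StronglyMeasurable[mΩ] fun ω => F ω i j) :
    AEStronglyMeasurable (fun ω => matVec (F ω)) μ := by
  have h1 : Measurable fun ω => (fun p : Fin n × Fin n => F ω p.1 p.2) :=
    measurable_pi_lambda _ fun p => (h p.1 p.2).measurable
  have h2 : Measurable fun ω => matVec (F ω) :=
    ((PiLp.continuousLinearEquiv 2 ℝ
      (fun _ : Fin n × Fin n => ℝ)).symm.continuous.measurable).comp h1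
  exact h2.aestronglyMeasurable

lemma euclid_integral_apply {ι : Type*} [Fintype ι] {Ω : Type*} {mΩ : MeasurableSpace Ω}
    {μ : Measure Ω} {V : Ω → EuclideanSpace ℝ ι} (hV : Integrable V μ) (p : ι) :
    (∫ ω, V ω ∂μ) p = ∫ ω, V ω p ∂μ :=
  ((EuclideanSpace.proj (𝕜 := ℝ) p).integral_comp_comm hV).symm

lemma step_bound {n : ℕ} {Ω : Type*} {mΩ : MeasurableSpace Ω}
    (μ : Measure Ω) [IsProbabilityMeasure μ] {m : MeasurableSpace Ω} (hm : m ≤ mΩ)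
    (amax K : ℝ) (hamax : 0 < amax) (hK : 0 ≤ K)
    (a x : Ω → EuclideanSpace ℝ (Fin n))
    (ham : StronglyMeasurable[mΩ] a) (hxm : StronglyMeasurable[m] x)
    (hanorm : ∀ᵐ ω ∂μ, ‖a ω‖ ≤ amax) (hxnorm : ∀ᵐ ω ∂μ, ‖x ω‖ ≤ amax)
    (hdev : ∀ᵐ ω ∂μ, (μ[(fun ω' => ‖a ω' - x ω'‖ ^ 2) | m]) ω ≤ K) :
    ‖matVec (Matrix.of fun i j =>
        ∫ ω, (((outerMat (a ω) -
            Matrix.of fun i' j' => (μ[(fun ω' => a ω' i' * a ω' j') | m]) ω) ^ 2) i j) ∂μ)‖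
      ≤ 4 * amax ^ 2 * K := by
  haveI : SigmaFinite (μ.trim hm) := by
    have : IsFiniteMeasure (μ.trim hm) := isFiniteMeasure_trim hm
    infer_instance
  set c : Fin n → Fin n → Ω → ℝ := fun i j => μ[(fun ω' => a ω' i * a ω' j) | m] with hc
  set Y : Ω → Matrix (Fin n) (Fin n) ℝ := fun ω =>
    outerMat (a ω) - Matrix.of fun i' j' => c i' j' ω with hY
  have hai : ∀ i, StronglyMeasurable[mΩ] (fun ω => a ω i) := coord_sm ham
  have hxi : ∀ i, StronglyMeasurable[m] (fun ω => x ω i) := coord_sm hxm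
  have haa : ∀ i j, StronglyMeasurable[mΩ] (fun ω => a ω i * a ω j) :=
    fun i j => (hai i).mul (hai j)
  have haab : ∀ i j, ∀ᵐ ω ∂μ, |a ω i * a ω j| ≤ amax ^ 2 := by
    intro i j
    filter_upwards [hanorm] with ω hω
    rw [abs_mul, sq]
    exact mul_le_mul ((abs_coord_le _ i).trans hω) ((abs_coord_le _ j).trans hω)
      (abs_nonneg _) hamax.le
  have hxxb : ∀ i j, ∀ᵐ ω ∂μ, |x ω i * x ω j| ≤ amax ^ 2 := by
    intro i j
    filter_upwards [hxnorm] with ω hω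
    rw [abs_mul, sq]
    exact mul_le_mul ((abs_coord_le _ i).trans hω) ((abs_coord_le _ j).trans hω)
      (abs_nonneg _) hamax.le
  have hcm : ∀ i j, StronglyMeasurable[mΩ] (c i j) :=
    fun i j => stronglyMeasurable_condExp.mono hm
  have hcb : ∀ i j, ∀ᵐ ω ∂μ, |c i j ω| ≤ amax ^ 2 := by
    intro i j
    have h := ae_bdd_condExp_of_ae_bdd (m := m) (μ := μ) (R := (amax ^ 2).toNNReal)
      (f := fun ω' => a ω' i * a ω' j)
      (by filter_upwards [haab i j] with ω hω
          rwa [Real.coe_toNNReal _ (sq_nonneg amax)])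
    filter_upwards [h] with ω hω
    rwa [Real.coe_toNNReal _ (sq_nonneg amax)] at hω
  have hYent : ∀ ω i j, Y ω i j = a ω i * a ω j - c i j ω := fun ω i j => rfl
  have hYm : ∀ i j, StronglyMeasurable[mΩ] (fun ω => Y ω i j) :=
    fun i j => (haa i j).sub (hcm i j)
  have hYb : ∀ᵐ ω ∂μ, ∀ i j, |Y ω i j| ≤ 2 * amax ^ 2 := by
    rw [ae_all_iff]
    intro i
    rw [ae_all_iff]
    intro j
    filter_upwards [haab i j, hcb i j] with ω h1 h2
    rw [hYent]
    calc |a ω i * a ω j - c i j ω| ≤ |a ω i * a ω j| + |c i j ω| := abs_sub _ _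
      _ ≤ 2 * amax ^ 2 := by linarith
  have hsq : ∀ ω i j, ((Y ω) ^ 2) i j = ∑ k, Y ω i k * Y ω k j := by
    intro ω i j; rw [pow_two, Matrix.mul_apply]
  have hE2m : ∀ i j, StronglyMeasurable[mΩ] (fun ω => ((Y ω) ^ 2) i j) := by
    intro i j
    have : (fun ω => ((Y ω) ^ 2) i j) = fun ω => ∑ k, Y ω i k * Y ω k j := by
      funext ω; exact hsq ω i j
    rw [this]
    exact Finset.stronglyMeasurable_fun_sum _ fun k _ => (hYm i k).mul (hYm k j)
  have hE2b : ∀ᵐ ω ∂μ, ∀ i j, |((Y ω) ^ 2) i j| ≤ n * (2 * amax ^ 2) ^ 2 := by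
    filter_upwards [hYb] with ω hω i j
    rw [hsq]
    calc |∑ k, Y ω i k * Y ω k j| ≤ ∑ k, |Y ω i k * Y ω k j| :=
          Finset.abs_sum_le_sum_abs _ _
      _ ≤ ∑ _k : Fin n, (2 * amax ^ 2) ^ 2 := by
          refine Finset.sum_le_sum fun k _ => ?_
          rw [abs_mul, sq]
          exact mul_le_mul (hω i k) (hω k j) (abs_nonneg _) (by positivity)
      _ = n * (2 * amax ^ 2) ^ 2 := by simp [mul_comm]
  have hE2int : ∀ i j, Integrable (fun ω => ((Y ω) ^ 2) i j) μ := by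
    intro i j
    refine integrable_of_bdd ((hE2m i j).aestronglyMeasurable (μ := μ)) (C := n * (2 * amax ^ 2) ^ 2) ?_
    filter_upwards [hE2b] with ω hω; exact hω i j
  -- the EuclideanSpace-valued integrand
  set V : Ω → EuclideanSpace ℝ (Fin n × Fin n) := fun ω => matVec ((Y ω) ^ 2) with hV
  have hVcoord : ∀ ω (p : Fin n × Fin n), V ω p = ((Y ω) ^ 2) p.1 p.2 := fun ω p => rfl
  have hVmeas : AEStronglyMeasurable[mΩ] V μ := aesm_matVec μ fun i j => hE2m i j
  have hVnorm_le : ∀ᵐ ω ∂μ, ‖V ω‖ ≤ n ^ 2 * (2 * amax ^ 2) ^ 2 := by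
    filter_upwards [hYb] with ω hω
    have h1 : ‖V ω‖ ≤ ∑ i, ∑ j, Y ω i j ^ 2 := by
      rw [hV]
      have := matVec_sq_norm_le (Y ω)
      rwa [← pow_two] at this
    refine h1.trans ?_
    calc ∑ i, ∑ j, Y ω i j ^ 2 ≤ ∑ _i : Fin n, ∑ _j : Fin n, (2 * amax ^ 2) ^ 2 := by
          refine Finset.sum_le_sum fun i _ => Finset.sum_le_sum fun j _ => ?_
          have := hω i j
          nlinarith [abs_nonneg (Y ω i j), sq_abs (Y ω i j)]
      _ = n ^ 2 * (2 * amax ^ 2) ^ 2 := by simp [Finset.sum_const]; ring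
  have hVint : Integrable V μ := by
    refine (integrable_const (n ^ 2 * (2 * amax ^ 2) ^ 2 : ℝ)).mono' hVmeas ?_
    filter_upwards [hVnorm_le] with ω hω using hω
  -- identify the matrix of integrals with the integral of V
  have hcomm : ∀ p : Fin n × Fin n, (∫ ω, V ω ∂μ) p = ∫ ω, V ω p ∂μ :=
    fun p => euclid_integral_apply hVint p
  have hBeq : matVec (Matrix.of fun i j =>
      ∫ ω, (((outerMat (a ω) -
          Matrix.of fun i' j' => (μ[(fun ω' => a ω' i' * a ω' j') | m]) ω) ^ 2) i j) ∂μ)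
      = ∫ ω, V ω ∂μ := by
    ext p
    rw [hcomm p]
    rfl
  rw [hBeq]
  -- the scalar dominating functions
  set S : Ω → ℝ := fun ω => ∑ i, ∑ j, Y ω i j ^ 2 with hS
  have hSm : StronglyMeasurable[mΩ] S := by
    apply Finset.stronglyMeasurable_fun_sum
    intro i _
    apply Finset.stronglyMeasurable_fun_sum
    intro j _
    exact (hYm i j).pow 2
  have hSb : ∀ᵐ ω ∂μ, |S ω| ≤ n ^ 2 * (2 * amax ^ 2) ^ 2 := by
    filter_upwards [hYb] with ω hω
    rw [abs_of_nonneg (by positivity)]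
    calc ∑ i, ∑ j, Y ω i j ^ 2 ≤ ∑ _i : Fin n, ∑ _j : Fin n, (2 * amax ^ 2) ^ 2 := by
          refine Finset.sum_le_sum fun i _ => Finset.sum_le_sum fun j _ => ?_
          have := hω i j
          nlinarith [abs_nonneg (Y ω i j), sq_abs (Y ω i j)]
      _ = n ^ 2 * (2 * amax ^ 2) ^ 2 := by simp [Finset.sum_const]; ring
  have hSint : Integrable S μ := integrable_of_bdd (hSm.aestronglyMeasurable (μ := μ)) hSb
  have hYsqint : ∀ i j, Integrable (fun ω => Y ω i j ^ 2) μ := by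
    intro i j
    refine integrable_of_bdd (((hYm i j).pow 2).aestronglyMeasurable (μ := μ))
      (C := (2 * amax ^ 2) ^ 2) ?_
    filter_upwards [hYb] with ω hω
    rw [abs_of_nonneg (sq_nonneg _)]
    have := hω i j
    nlinarith [abs_nonneg (Y ω i j), sq_abs (Y ω i j)]
  -- difference with x-outer products
  have hdm : ∀ i j, StronglyMeasurable[mΩ] (fun ω => (a ω i * a ω j - x ω i * x ω j) ^ 2) :=
    fun i j => ((haa i j).sub (((hxi i).mono hm).mul ((hxi j).mono hm))).pow 2
  have hdb : ∀ i j, ∀ᵐ ω ∂μ, |(a ω i * a ω j - x ω i * x ω j) ^ 2| ≤ (2 * amax ^ 2) ^ 2 := by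
    intro i j
    filter_upwards [haab i j, hxxb i j] with ω h1 h2
    rw [abs_of_nonneg (sq_nonneg _)]
    nlinarith [abs_nonneg (a ω i * a ω j), sq_abs (a ω i * a ω j - x ω i * x ω j),
      abs_sub (a ω i * a ω j) (x ω i * x ω j),
      abs_nonneg (a ω i * a ω j - x ω i * x ω j)]
  have hdint : ∀ i j, Integrable (fun ω => (a ω i * a ω j - x ω i * x ω j) ^ 2) μ :=
    fun i j => integrable_of_bdd ((hdm i j).aestronglyMeasurable (μ := μ)) (hdb i j)
  have hnint : Integrable (fun ω => 4 * amax ^ 2 * ‖a ω - x ω‖ ^ 2) μ := by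
    refine integrable_of_bdd (μ := μ) (C := 4 * amax ^ 2 * (2 * amax) ^ 2) ?_ ?_
    · exact ((((ham.sub (hxm.mono hm)).norm).pow 2).const_mul _).aestronglyMeasurable
    · filter_upwards [hanorm, hxnorm] with ω h1 h2
      have h3 : ‖a ω - x ω‖ ≤ 2 * amax := by
        calc ‖a ω - x ω‖ ≤ ‖a ω‖ + ‖x ω‖ := norm_sub_le _ _
          _ ≤ 2 * amax := by linarith
      rw [abs_of_nonneg (by positivity)]
      have h4 : ‖a ω - x ω‖ ^ 2 ≤ (2 * amax) ^ 2 := by nlinarith [norm_nonneg (a ω - x ω)]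
      exact mul_le_mul_of_nonneg_left h4 (by positivity)
  -- main chain
  calc ‖∫ ω, V ω ∂μ‖ ≤ ∫ ω, ‖V ω‖ ∂μ := norm_integral_le_integral_norm V
    _ ≤ ∫ ω, S ω ∂μ := by
        refine integral_mono_ae hVint.norm hSint ?_
        refine Filter.Eventually.of_forall fun ω => ?_
        have := matVec_sq_norm_le (Y ω)
        rw [← pow_two] at this
        exact this
    _ = ∑ i, ∑ j, ∫ ω, Y ω i j ^ 2 ∂μ := by
        rw [hS]
        rw [integral_finset_sum _ fun i _ =>
          (integrable_finset_sum _ fun j _ => hYsqint i j)]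
        exact Finset.sum_congr rfl fun i _ => integral_finset_sum _ fun j _ => hYsqint i j
    _ ≤ ∑ i, ∑ j, ∫ ω, (a ω i * a ω j - x ω i * x ω j) ^ 2 ∂μ := by
        refine Finset.sum_le_sum fun i _ => Finset.sum_le_sum fun j _ => ?_
        have heq : (fun ω => Y ω i j ^ 2)
            = fun ω => ((fun ω' => a ω' i * a ω' j) ω - (μ[(fun ω' => a ω' i * a ω' j) | m]) ω) ^ 2 := by
          funext ω; rw [hYent]
        rw [heq]
        exact condexp_L2_proj hm (sq_nonneg amax) (haa i j) (haab i j)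
          ((hxi i).mul (hxi j)) (hxxb i j)
    _ = ∫ ω, ∑ i, ∑ j, (a ω i * a ω j - x ω i * x ω j) ^ 2 ∂μ := by
        rw [integral_finset_sum _ fun i _ =>
          (integrable_finset_sum _ fun j _ => hdint i j)]
        exact Finset.sum_congr rfl fun i _ =>
          (integral_finset_sum _ fun j _ => hdint i j).symm
    _ ≤ ∫ ω, 4 * amax ^ 2 * ‖a ω - x ω‖ ^ 2 ∂μ := by
        refine integral_mono_ae (integrable_finset_sum _ fun i _ =>
          (integrable_finset_sum _ fun j _ => hdint i j)) hnint ?_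
        filter_upwards [hanorm, hxnorm] with ω h1 h2
        exact outer_diff_bound amax (a ω) (x ω) h1 h2
    _ = 4 * amax ^ 2 * ∫ ω, ‖a ω - x ω‖ ^ 2 ∂μ := integral_const_mul _ _
    _ ≤ 4 * amax ^ 2 * K := by
        have h1 : ∫ ω, ‖a ω - x ω‖ ^ 2 ∂μ ≤ K := by
          have h2 : ∫ ω, ‖a ω - x ω‖ ^ 2 ∂μ
              = ∫ ω, (μ[(fun ω' => ‖a ω' - x ω'‖ ^ 2) | m]) ω ∂μ :=
            (integral_condExp hm (μ := μ) (f := fun ω' => ‖a ω' - x ω'‖ ^ 2)).symm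
          rw [h2]
          calc ∫ ω, (μ[(fun ω' => ‖a ω' - x ω'‖ ^ 2) | m]) ω ∂μ ≤ ∫ _ω, K ∂μ :=
                integral_mono_ae integrable_condExp (integrable_const K) hdev
            _ = K := by simp [measure_univ]
        exact mul_le_mul_of_nonneg_left h1 (by positivity)


end CMVAux

open CMVAux in
/-- bounded cumulative matrix variation. If `‖a_s‖, ‖x_s‖ ≤ a_max` a.s.,
`x_s` is `ℱ_{s−1}`-measurable, and `E[‖a_s − x_s‖² | ℱ_{s−1}] ≤ nD/√s` a.s., then the spectral
norm of `∑_{s=1}^t E[(a_s a_sᵀ − E[a_s a_sᵀ | ℱ_{s−1}])²]` is at most `128 a_max² n D √t`. -/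
theorem cumulative_matrix_variation_bound {n : ℕ} {Ω : Type*} {mΩ : MeasurableSpace Ω}
    (μ : Measure Ω) [IsProbabilityMeasure μ]
    (ℱ : Filtration ℕ mΩ)
    (amax D : ℝ) (hamax : 0 < amax) (hD : 0 < D)
    (a x : ℕ → Ω → EuclideanSpace ℝ (Fin n))
    (hameas : ∀ s, StronglyMeasurable[ℱ s] (a s))
    (hxmeas : ∀ s, 1 ≤ s → StronglyMeasurable[ℱ (s - 1)] (x s))
    (hanorm : ∀ s, ∀ᵐ ω ∂μ, ‖a s ω‖ ≤ amax)
    (hxnorm : ∀ s, ∀ᵐ ω ∂μ, ‖x s ω‖ ≤ amax)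
    (hdev : ∀ s, 1 ≤ s → ∀ᵐ ω ∂μ,
      (μ[(fun ω' => ‖a s ω' - x s ω'‖ ^ 2) | ℱ (s - 1)]) ω ≤ n * D / Real.sqrt s)
    (t : ℕ) (ht : 1 ≤ t) :
    specNorm (∑ s ∈ Finset.Icc 1 t, Matrix.of fun i j =>
        ∫ ω, (((outerMat (a s ω) -
            Matrix.of fun i' j' => (μ[(fun ω' => a s ω' i' * a s ω' j') | ℱ (s - 1)]) ω) ^ 2)
          i j) ∂μ)
      ≤ 128 * amax ^ 2 * n * D * Real.sqrt t := by
  classical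
  set B : ℕ → Matrix (Fin n) (Fin n) ℝ := fun s => Matrix.of fun i j =>
      ∫ ω, (((outerMat (a s ω) -
          Matrix.of fun i' j' => (μ[(fun ω' => a s ω' i' * a s ω' j') | ℱ (s - 1)]) ω) ^ 2)
        i j) ∂μ with hB
  have hstep : ∀ s ∈ Finset.Icc 1 t,
      ‖matVec (B s)‖ ≤ 4 * amax ^ 2 * ((n : ℝ) * D / Real.sqrt s) := by
    intro s hs
    have hs1 : 1 ≤ s := (Finset.mem_Icc.mp hs).1
    have hK : 0 ≤ (n : ℝ) * D / Real.sqrt s := by positivity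
    exact step_bound μ (ℱ.le (s - 1)) amax _ hamax hK (a s) (x s)
      ((hameas s).mono (ℱ.le s)) (hxmeas s hs1) (hanorm s) (hxnorm s) (hdev s hs1)
  have hchain : specNorm (∑ s ∈ Finset.Icc 1 t, B s)
      ≤ 4 * amax ^ 2 * ((n : ℝ) * D) * (2 * Real.sqrt t) := by
    calc specNorm (∑ s ∈ Finset.Icc 1 t, B s)
        ≤ ‖matVec (∑ s ∈ Finset.Icc 1 t, B s)‖ := specNorm_le_matVec _
      _ = ‖∑ s ∈ Finset.Icc 1 t, matVec (B s)‖ := by rw [matVec_sum]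
      _ ≤ ∑ s ∈ Finset.Icc 1 t, ‖matVec (B s)‖ := norm_sum_le _ _
      _ ≤ ∑ s ∈ Finset.Icc 1 t, 4 * amax ^ 2 * ((n : ℝ) * D / Real.sqrt s) :=
          Finset.sum_le_sum hstep
      _ = 4 * amax ^ 2 * ((n : ℝ) * D) * ∑ s ∈ Finset.Icc 1 t, (Real.sqrt s)⁻¹ := by
          rw [Finset.mul_sum]
          exact Finset.sum_congr rfl fun s _ => by rw [div_eq_mul_inv]; ring
      _ ≤ 4 * amax ^ 2 * ((n : ℝ) * D) * (2 * Real.sqrt t) := by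
          refine mul_le_mul_of_nonneg_left (sum_inv_sqrt_le t) ?_
          positivity
  refine hchain.trans ?_
  have hX : 0 ≤ amax ^ 2 * ((n : ℝ) * D) * Real.sqrt t := by positivity
  nlinarith [hX]
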